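/- arXiv:1512.06295 — 4 statements merged into one kernel-verified Lean document; each statement's English description precedes it below -/
import Mathlib

section
/- Consider the vector fields on ℝ⁴ (coordinates (l,h,t,V)): e₁ = e^{rt} ∂_l, e₂ = ∂_V, e₃ = l ∂_l + h ∂_h + (γV − (1−γ)·F(t)) ∂_V, where F is an antiderivative of the survival function Φ̄. Then the Lie brackets satisfy [e₂, e₃] = γ·e₂ and [e₁, e₃] = e₁, and [e₁, e₂] = 0. -/
open Real

/-- Lie bracket of vector fields on ℝ⁴, coefficientwise:
`[X,Y](p) = (DY)(p)(X p) − (DX)(p)(Y p)`. -/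
noncomputable def lieB (X Y : (Fin 4 → ℝ) → (Fin 4 → ℝ)) : (Fin 4 → ℝ) → (Fin 4 → ℝ) :=
  fun p => fderiv ℝ Y p (X p) - fderiv ℝ X p (Y p)

open ContinuousLinearMap in
/-- Commutator relations of the symmetry algebra L₃ for a general liquidation
time distribution: coordinates p = (l, h, t, V). -/
theorem brackets_L3_HARA (r γ : ℝ) (hγ0 : 0 < γ) (hγ1 : γ < 1)
    (Φ F : ℝ → ℝ) (hΦ : Continuous Φ) (hF : ∀ t, HasDerivAt F (Φ t) t) :
    let e₁ : (Fin 4 → ℝ) → (Fin 4 → ℝ) := fun p => ![Real.exp (r * p 2), 0, 0, 0]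
    let e₂ : (Fin 4 → ℝ) → (Fin 4 → ℝ) := fun _ => ![0, 0, 0, 1]
    let e₃ : (Fin 4 → ℝ) → (Fin 4 → ℝ) :=
      fun p => ![p 0, p 1, 0, γ * p 3 - (1 - γ) * F (p 2)]
    lieB e₂ e₃ = (fun p => γ • e₂ p) ∧ lieB e₁ e₃ = e₁ ∧ lieB e₁ e₂ = fun _ => 0 := by
  intro e₁ e₂ e₃
  have h1 : ∀ p : Fin 4 → ℝ, HasFDerivAt e₁
      (ContinuousLinearMap.pi
        ![Real.exp (r * p 2) • ((r : ℝ) • proj (R := ℝ) (φ := fun _ : Fin 4 => ℝ) 2),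
          0, 0, 0]) p := by
    intro p
    apply hasFDerivAt_pi.2
    intro i
    have h2 : HasFDerivAt (fun q : Fin 4 → ℝ => r * q 2)
        ((r : ℝ) • proj (R := ℝ) (φ := fun _ : Fin 4 => ℝ) 2) p :=
      (hasFDerivAt_apply 2 p).const_mul r
    fin_cases i
    · simpa [Function.comp_def] using (Real.hasDerivAt_exp (r * p 2)).comp_hasFDerivAt p h2
    · simpa using hasFDerivAt_const (0 : ℝ) p
    · simpa using hasFDerivAt_const (0 : ℝ) p
    · simpa using hasFDerivAt_const (0 : ℝ) p
  have h3 : ∀ p : Fin 4 → ℝ, HasFDerivAt e₃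
      (ContinuousLinearMap.pi
        ![proj (R := ℝ) (φ := fun _ : Fin 4 => ℝ) 0,
          proj (R := ℝ) (φ := fun _ : Fin 4 => ℝ) 1, 0,
          γ • proj (R := ℝ) (φ := fun _ : Fin 4 => ℝ) 3 -
            (1 - γ) • (Φ (p 2) • proj (R := ℝ) (φ := fun _ : Fin 4 => ℝ) 2)]) p := by
    intro p
    apply hasFDerivAt_pi.2
    intro i
    fin_cases i
    · simpa using hasFDerivAt_apply (𝕜 := ℝ) 0 p
    · simpa using hasFDerivAt_apply (𝕜 := ℝ) 1 p
    · simpa using hasFDerivAt_const (0 : ℝ) p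
    · have hFc : HasFDerivAt (fun q : Fin 4 → ℝ => F (q 2))
          (Φ (p 2) • proj (R := ℝ) (φ := fun _ : Fin 4 => ℝ) 2) p :=
        (hF (p 2)).comp_hasFDerivAt p (hasFDerivAt_apply 2 p)
      simpa [Pi.sub_def] using ((hasFDerivAt_apply (𝕜 := ℝ) 3 p).const_mul γ).sub (hFc.const_mul (1 - γ))
  have h2c : ∀ p : Fin 4 → ℝ, fderiv ℝ e₂ p = 0 := fun p => fderiv_const_apply _
  refine ⟨?_, ?_, ?_⟩
  · funext p
    rw [lieB, (h3 p).fderiv, h2c p]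
    funext i
    fin_cases i <;>
      simp [e₂, ContinuousLinearMap.pi_apply, Matrix.cons_val_zero, Matrix.cons_val_one]
  · funext p
    rw [lieB, (h3 p).fderiv, (h1 p).fderiv]
    funext i
    fin_cases i <;>
      simp [e₁, e₃, ContinuousLinearMap.pi_apply]
  · funext p
    rw [lieB, (h1 p).fderiv, h2c p]
    funext i
    fin_cases i <;>
      simp [e₁, e₂, ContinuousLinearMap.pi_apply]
end

section
/- The vector fields e₁ = −l∂_l − h∂_h + F(t)∂_V, e₂ = e^{rt}∂_l, e₃ = −∂_V on ℝ⁴ (with F' = Φ̄) satisfy [e₁,e₂] = e₂, [e₁,e₃] = 0, and [e₂,e₃] = 0; hence the Lie algebra they span is isomorphic to A₁ ⊕ A₂ (the direct sum of the one-dimensional abelian algebra spanned by e₃ and the two-dimensional non-abelian algebra spanned by e₁, e₂). -/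
open Real

section aux

def pr (i : Fin 4) : (Fin 4 → ℝ) →L[ℝ] ℝ := ContinuousLinearMap.proj i

noncomputable def D1 (c : ℝ) : (Fin 4 → ℝ) →L[ℝ] (Fin 4 → ℝ) :=
  ContinuousLinearMap.pi ![-(pr 0), -(pr 1), 0, c • pr 2]

noncomputable def D2 (c : ℝ) : (Fin 4 → ℝ) →L[ℝ] (Fin 4 → ℝ) :=
  ContinuousLinearMap.pi ![c • pr 2, 0, 0, 0]

lemma hD1 (Φ F : ℝ → ℝ) (hF : ∀ t, HasDerivAt F (Φ t) t) (p : Fin 4 → ℝ) :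
    HasFDerivAt (fun p : Fin 4 → ℝ => ![-(p 0), -(p 1), (0:ℝ), F (p 2)]) (D1 (Φ (p 2))) p := by
  rw [hasFDerivAt_pi']
  intro i
  fin_cases i <;> simp [D1, ContinuousLinearMap.proj_pi, Matrix.cons_val_zero, Matrix.cons_val_one]
  · exact ((hasFDerivAt_apply 0 p).neg)
  · exact ((hasFDerivAt_apply 1 p).neg)
  · exact hasFDerivAt_const _ _
  · exact (hF (p 2)).comp_hasFDerivAt p (hasFDerivAt_apply 2 p)

lemma hD2 (r : ℝ) (p : Fin 4 → ℝ) :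
    HasFDerivAt (fun p : Fin 4 → ℝ => ![Real.exp (r * p 2), (0:ℝ), 0, 0]) (D2 (r * Real.exp (r * p 2))) p := by
  rw [hasFDerivAt_pi']
  intro i
  fin_cases i <;> simp [D2, ContinuousLinearMap.proj_pi]
  · have h : HasDerivAt (fun t : ℝ => Real.exp (r * t)) (r * Real.exp (r * p 2)) (p 2) := by
      have := ((hasDerivAt_id (p 2)).const_mul r).exp
      simpa [mul_comm] using this
    exact h.comp_hasFDerivAt p (hasFDerivAt_apply (2 : Fin 4) p : HasFDerivAt (fun f : Fin 4 → ℝ => f 2) (pr 2) p)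
  all_goals exact hasFDerivAt_const _ _

lemma hD3 (p : Fin 4 → ℝ) :
    HasFDerivAt (fun _ : Fin 4 → ℝ => ![(0:ℝ), 0, 0, -1]) (0 : (Fin 4 → ℝ) →L[ℝ] (Fin 4 → ℝ)) p :=
  hasFDerivAt_const _ _

end aux

/-- Commutator relations of the symmetry algebra L₃^{LOG} (type A₁ ⊕ A₂):
the only nonzero bracket is [e₁,e₂] = e₂, and e₃ is central. -/
theorem brackets_L3_LOG (r : ℝ) (Φ F : ℝ → ℝ) (hΦ : Continuous Φ)
    (hF : ∀ t, HasDerivAt F (Φ t) t) :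
    let e₁ : (Fin 4 → ℝ) → (Fin 4 → ℝ) := fun p => ![-(p 0), -(p 1), 0, F (p 2)]
    let e₂ : (Fin 4 → ℝ) → (Fin 4 → ℝ) := fun p => ![Real.exp (r * p 2), 0, 0, 0]
    let e₃ : (Fin 4 → ℝ) → (Fin 4 → ℝ) := fun _ => ![0, 0, 0, -1]
    lieB e₁ e₂ = e₂ ∧ lieB e₁ e₃ = (fun _ => 0) ∧ lieB e₂ e₃ = (fun _ => 0) := by
  intro e₁ e₂ e₃
  have f1 : ∀ p, fderiv ℝ e₁ p = D1 (Φ (p 2)) := fun p => (hD1 Φ F hF p).fderiv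
  have f2 : ∀ p, fderiv ℝ e₂ p = D2 (r * Real.exp (r * p 2)) := fun p => (hD2 r p).fderiv
  have f3 : ∀ p, fderiv ℝ e₃ p = 0 := fun p => (hD3 p).fderiv
  refine ⟨?_, ?_, ?_⟩ <;> funext p <;>
    simp only [lieB, f1, f2, f3, e₁, e₂, e₃, ContinuousLinearMap.zero_apply] <;>
    funext i <;> fin_cases i <;>
    simp [D1, D2, pr, ContinuousLinearMap.pi_apply, Matrix.cons_val_zero, Matrix.cons_val_one]
end

section
/- For κ ≠ rγ, define e₁ = (rU₃ + U₄)/(κ−rγ), e₂ = U₁, e₃ = −(κU₃ + γU₄)/(κ−rγ), e₄ = U₂ in an abstract 4-dimensional Lie algebra whose only nonzero brackets among U₁,…,U₄ are [U₁,U₃] = γU₁, [U₁,U₄] = −κU₁, [U₂,U₃] = U₂, [U₂,U₄] = −rU₂. Then the only nonzero brackets among e₁,…,e₄ are [e₁,e₂] = e₂ and [e₃,e₄] = e₄; in particular the algebra is isomorphic to A₂ ⊕ A₂. -/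
/-- Basis change in the abstract four-dimensional symmetry algebra for κ ≠ rγ:
in the new basis the only nonzero brackets are [e₁,e₂] = e₂ and [e₃,e₄] = e₄
(the structure of A₂ ⊕ A₂). -/
theorem new_basis_brackets (L : Type*) [LieRing L] [LieAlgebra ℝ L]
    (r κ γ : ℝ) (hne : κ ≠ r * γ) (U₁ U₂ U₃ U₄ : L)
    (h13 : ⁅U₁, U₃⁆ = γ • U₁) (h14 : ⁅U₁, U₄⁆ = (-κ) • U₁)
    (h23 : ⁅U₂, U₃⁆ = U₂) (h24 : ⁅U₂, U₄⁆ = (-r) • U₂)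
    (h12 : ⁅U₁, U₂⁆ = 0) (h34 : ⁅U₃, U₄⁆ = 0) :
    let e₁ : L := (κ - r * γ)⁻¹ • (r • U₃ + U₄)
    let e₂ : L := U₁
    let e₃ : L := -((κ - r * γ)⁻¹ • (κ • U₃ + γ • U₄))
    let e₄ : L := U₂
    ⁅e₁, e₂⁆ = e₂ ∧ ⁅e₃, e₄⁆ = e₄ ∧ ⁅e₁, e₃⁆ = 0 ∧ ⁅e₁, e₄⁆ = 0 ∧
      ⁅e₂, e₃⁆ = 0 ∧ ⁅e₂, e₄⁆ = 0 := by
  intro e₁ e₂ e₃ e₄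
  have hd : κ - r * γ ≠ 0 := sub_ne_zero.mpr hne
  have h31 : ⁅U₃, U₁⁆ = -(γ • U₁) := by rw [← lie_skew, h13]
  have h41 : ⁅U₄, U₁⁆ = -((-κ) • U₁) := by rw [← lie_skew, h14]
  have h32 : ⁅U₃, U₂⁆ = -U₂ := by rw [← lie_skew, h23]
  have h42 : ⁅U₄, U₂⁆ = -((-r) • U₂) := by rw [← lie_skew, h24]
  have h43 : ⁅U₄, U₃⁆ = -(0:L) := by rw [← lie_skew, h34]
  simp only [e₁, e₂, e₃, e₄, lie_add, add_lie, lie_smul, smul_lie, lie_neg, neg_lie, lie_self,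
    h13, h14, h23, h24, h12, h34, h31, h41, h32, h42, h43, smul_neg, smul_smul, smul_zero,
    neg_zero, add_zero, zero_add, neg_neg, lie_zero, zero_lie]
  refine ⟨?_, ?_, ?_, ?_, ?_, ?_⟩ <;>
    first
      | trivial
      | (match_scalars; first | trivial | (field_simp; try ring))
end

section
/- The functions z = l/h, τ = (κ/γ)t − log h, and W = V + ((1−γ)/(γκ))e^{-κt} are invariants of the vector field X = −(κ/(κ−rγ))l∂_l − (κ/(κ−rγ))h∂_h − (γ/(κ−rγ))∂_t − ((1−γ)/(κ−rγ))e^{-κt}∂_V on the domain h > 0, i.e. X(z) = X(τ) = X(W) = 0. -/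
open Real
noncomputable def Yop (cl ch ct cV : ℝ → ℝ → ℝ → ℝ → ℝ)
    (G : ℝ → ℝ → ℝ → ℝ → ℝ) (l h t V : ℝ) : ℝ :=
  cl l h t V * deriv (fun x => G x h t V) l + ch l h t V * deriv (fun y => G l y t V) h +
    ct l h t V * deriv (fun s => G l h s V) t + cV l h t V * deriv (fun w => G l h t w) V

/-- z = l/h, τ = (κ/γ)t − log h and W = V + ((1−γ)/(γκ))e^{-κt} are invariants of
the field from the case H₂(h₂) of L₄^{HARA} (κ ≠ rγ) on the domain h > 0. -/
theorem invariants_H2 (r κ γ : ℝ) (hr : 0 < r) (hκ : 0 < κ) (hγ0 : 0 < γ) (hγ1 : γ < 1)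
    (hne : κ ≠ r * γ) (l h t V : ℝ) (hh : 0 < h) :
    let cl : ℝ → ℝ → ℝ → ℝ → ℝ := fun l _ _ _ => -(κ / (κ - r * γ)) * l
    let ch : ℝ → ℝ → ℝ → ℝ → ℝ := fun _ h _ _ => -(κ / (κ - r * γ)) * h
    let ct : ℝ → ℝ → ℝ → ℝ → ℝ := fun _ _ _ _ => -(γ / (κ - r * γ))
    let cV : ℝ → ℝ → ℝ → ℝ → ℝ :=
      fun _ _ t _ => -((1 - γ) / (κ - r * γ)) * Real.exp (-κ * t)
    Yop cl ch ct cV (fun l h _ _ => l / h) l h t V = 0 ∧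
    Yop cl ch ct cV (fun _ h t _ => (κ / γ) * t - Real.log h) l h t V = 0 ∧
    Yop cl ch ct cV
      (fun _ _ t V => V + ((1 - γ) / (γ * κ)) * Real.exp (-κ * t)) l h t V = 0 := by
  intro cl ch ct cV
  have hh' : h ≠ 0 := ne_of_gt hh
  have hγ' : γ ≠ 0 := ne_of_gt hγ0
  have hκ' : κ ≠ 0 := ne_of_gt hκ
  have d1 : deriv (fun x : ℝ => x / h) l = 1 / h := by
    simp [deriv_div_const]
  have hd : κ - r * γ ≠ 0 := sub_ne_zero.mpr hne
  have d2 : deriv (fun y : ℝ => l / y) h = -(l / h ^ 2) := by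
    have : HasDerivAt (fun y : ℝ => l / y) (l * (-(h ^ 2)⁻¹)) h := by
      simpa [div_eq_mul_inv] using (hasDerivAt_inv hh').const_mul l
    rw [this.deriv]; field_simp
  have d3 : deriv (fun y : ℝ => (κ / γ) * t - Real.log y) h = -(1 / h) := by
    have : HasDerivAt (fun y : ℝ => (κ / γ) * t - Real.log y) (0 - h⁻¹) h :=
      (hasDerivAt_const h _).sub (Real.hasDerivAt_log hh')
    rw [this.deriv]; field_simp; ring
  have d4 : deriv (fun s : ℝ => (κ / γ) * s - Real.log h) t = κ / γ := by
    have : HasDerivAt (fun s : ℝ => (κ / γ) * s - Real.log h) (κ / γ * 1) t :=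
      ((hasDerivAt_id t).const_mul (κ / γ)).sub_const _
    rw [this.deriv]; ring
  have d5 : deriv (fun s : ℝ => V + ((1 - γ) / (γ * κ)) * Real.exp (-κ * s)) t
      = ((1 - γ) / (γ * κ)) * (-κ * Real.exp (-κ * t)) := by
    rw [deriv_const_add]
    have : HasDerivAt (fun s : ℝ => ((1 - γ) / (γ * κ)) * Real.exp (-κ * s))
        (((1 - γ) / (γ * κ)) * (Real.exp (-κ * (id t)) * (-κ * 1))) t :=
      (((hasDerivAt_id t).const_mul (-κ)).exp.const_mul _)
    rw [this.deriv]; simp only [id_eq, mul_one]; ring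
  have d6 : deriv (fun w : ℝ => w + ((1 - γ) / (γ * κ)) * Real.exp (-κ * t)) V = 1 := by
    simp
  refine ⟨?_, ?_, ?_⟩ <;> simp only [Yop, cl, ch, ct, cV, d1, d2, d3, d4, d5, d6]
  · simp only [deriv_const]
    field_simp
    ring
  · simp only [deriv_const]
    field_simp
    ring
  · simp only [deriv_const]
    field_simp
    ring
end
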